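/- arXiv:2001.01650 — 4 statements merged into one kernel-verified Lean document; each statement's English description precedes it below -/
import Mathlib

section
/- For every λ ∈ ℂ, there exists a nontrivial solution y of −y'' + q·y = λ²·y satisfying the periodic boundary conditions y(0) = y(1) and y'(0) = y'(1) if and only if Δ(λ) = 2. -/
/-- `IsSol q μ y yd` says that `y : ℝ → ℂ` is a (twice continuously differentiable)
solution of `−y'' + q·y = μ·y` on all of `ℝ`, with first derivative `yd`. -/
def IsSol (q : ℝ → ℂ) (μ : ℂ) (y yd : ℝ → ℂ) : Prop :=
  (∀ x : ℝ, HasDerivAt y (yd x) x) ∧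
  (∀ x : ℝ, HasDerivAt yd (q x * y x - μ * y x) x)

/-- The Wronskian of two solutions of the same equation is constant. -/
lemma wron_const (q : ℝ → ℂ) (μ : ℂ) (y yd z zd : ℝ → ℂ)
    (hy : IsSol q μ y yd) (hz : IsSol q μ z zd) (x : ℝ) :
    y x * zd x - z x * yd x = y 0 * zd 0 - z 0 * yd 0 := by
  have key : ∀ t : ℝ, HasDerivAt (fun u => y u * zd u - z u * yd u) 0 t := by
    intro t
    have h := ((hy.1 t).mul (hz.2 t)).sub ((hz.1 t).mul (hy.2 t))
    convert h using 1
    · rfl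
    · rfl
    ring
  exact is_const_of_deriv_eq_zero (fun t => (key t).differentiableAt)
    (fun t => (key t).deriv) x 0

/-- A nontrivial periodic solution exists iff Δ(λ) = 2. -/
theorem stmt6 (q : ℝ → ℂ) (hq : Continuous q)
    (c s cd sd : ℂ → ℝ → ℂ)
    (hc : ∀ l : ℂ, IsSol q (l ^ 2) (c l) (cd l))
    (hs : ∀ l : ℂ, IsSol q (l ^ 2) (s l) (sd l))
    (hc0 : ∀ l : ℂ, c l 0 = 1) (hcd0 : ∀ l : ℂ, cd l 0 = 0)
    (hs0 : ∀ l : ℂ, s l 0 = 0) (hsd0 : ∀ l : ℂ, sd l 0 = 1) (l : ℂ) :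
    (∃ y yd : ℝ → ℂ, IsSol q (l ^ 2) y yd ∧ y ≠ 0 ∧ y 0 = y 1 ∧ yd 0 = yd 1) ↔
      c l 1 + sd l 1 = 2 := by
  -- Wronskian of c and s is 1
  have hW : ∀ x : ℝ, c l x * sd l x - s l x * cd l x = 1 := by
    intro x
    have := wron_const q (l ^ 2) (c l) (cd l) (s l) (sd l) (hc l) (hs l) x
    rw [hc0, hs0, hcd0, hsd0] at this
    simpa using this
  constructor
  · rintro ⟨y, yd, hsol, hy0, hper, hper'⟩
    set a := y 0 with ha
    set b := yd 0 with hb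
    -- Wronskians of y with c and with s are constant
    have hW1 : ∀ x : ℝ, y x * cd l x - c l x * yd x = -b := by
      intro x
      have := wron_const q (l ^ 2) y yd (c l) (cd l) hsol (hc l) x
      rw [hc0, hcd0] at this
      simpa using this
    have hW2 : ∀ x : ℝ, y x * sd l x - s l x * yd x = a := by
      intro x
      have := wron_const q (l ^ 2) y yd (s l) (sd l) hsol (hs l) x
      rw [hs0, hsd0] at this
      simpa using this
    -- hence y = a·c + b·s, yd = a·cd + b·sd
    have hy : ∀ x : ℝ, y x = a * c l x + b * s l x := by
      intro x
      linear_combination c l x * (hW2 x) - s l x * (hW1 x) - y x * (hW x)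
    have hyd : ∀ x : ℝ, yd x = a * cd l x + b * sd l x := by
      intro x
      linear_combination cd l x * (hW2 x) - sd l x * (hW1 x) - yd x * (hW x)
    -- (a,b) ≠ 0
    have hab : a ≠ 0 ∨ b ≠ 0 := by
      by_contra h
      push_neg at h
      apply hy0
      funext x
      simp [hy x, h.1, h.2]
    -- periodicity equations
    have e1 : (c l 1 - 1) * a + s l 1 * b = 0 := by
      have := hper
      rw [hy 1] at this
      linear_combination -this
    have e2 : cd l 1 * a + (sd l 1 - 1) * b = 0 := by
      have := hper'
      rw [hyd 1] at this
      linear_combination -this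
    rcases hab with h | h
    · have key : (2 - (c l 1 + sd l 1)) * a = 0 := by
        linear_combination (sd l 1 - 1) * e1 - s l 1 * e2 - a * (hW 1)
      rcases mul_eq_zero.mp key with h2 | h2
      · linear_combination -h2
      · exact absurd h2 h
    · have key : (2 - (c l 1 + sd l 1)) * b = 0 := by
        linear_combination (c l 1 - 1) * e2 - cd l 1 * e1 - b * (hW 1)
      rcases mul_eq_zero.mp key with h2 | h2
      · linear_combination -h2
      · exact absurd h2 h
  · intro htr
    by_cases hs1 : s l 1 = 0
    -- case s(1) = 0 : then sd(1) = 1 and s itself is periodic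
    · have hsd1 : sd l 1 = 1 := by
        have h2 : (sd l 1 - 1) ^ 2 = 0 := by
          have := hW 1
          rw [hs1] at this
          linear_combination -this + sd l 1 * htr
        have h3 := pow_eq_zero_iff (n := 2) (by norm_num) |>.mp h2
        linear_combination h3
      refine ⟨s l, sd l, hs l, ?_, ?_, ?_⟩
      · intro h0
        have h1 := (hs l).1 0
        rw [h0] at h1
        have h2 : sd l 0 = 0 := h1.unique (by simpa using hasDerivAt_const (0:ℝ) (0:ℂ))
        rw [hsd0] at h2
        exact one_ne_zero h2
      · rw [hs0, hs1]
      · rw [hsd0, hsd1]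
    -- case s(1) ≠ 0 : eigenvector (s(1), 1 - c(1))
    · refine ⟨fun x => s l 1 * c l x + (1 - c l 1) * s l x,
        fun x => s l 1 * cd l x + (1 - c l 1) * sd l x, ⟨?_, ?_⟩, ?_, ?_, ?_⟩
      · intro x
        exact (((hc l).1 x).const_mul _).add (((hs l).1 x).const_mul _)
      · intro x
        have h := (((hc l).2 x).const_mul (s l 1)).add (((hs l).2 x).const_mul (1 - c l 1))
        convert h using 1
        · rfl
        · rfl
        ring
      · intro h0
        have := congrFun h0 0
        simp only [hc0, hs0, Pi.zero_apply] at this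
        apply hs1
        linear_combination this
      · simp only [hc0, hs0]
        ring
      · simp only [hcd0, hsd0]
        have := hW 1
        linear_combination this - htr
end

section
/- If q satisfies condition (B), then for every λ ∈ ℂ one has c'(1/2,λ) = −λ²·s(1/2,λ). -/
/-- The auxiliary function σ(x) = ∫_{1/2}^x (q(t) - q(1/2-t))/2 dt. -/
noncomputable def sg13 (q : ℝ → ℂ) (x : ℝ) : ℂ :=
  ∫ t in (1/2 : ℝ)..x, (q t - q (1/2 - t)) / 2

lemma sg13_hasDerivAt (q : ℝ → ℂ) (hq : Continuous q) (x : ℝ) :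
    HasDerivAt (sg13 q) ((q x - q (1/2 - x)) / 2) x := by
  have h2 : Continuous (fun t : ℝ => (q t - q (1/2 - t)) / 2) := by
    exact ((hq.sub (hq.comp (continuous_const.sub continuous_id))).div_const 2)
  exact intervalIntegral.integral_hasDerivAt_right (h2.intervalIntegrable _ _)
    (h2.aestronglyMeasurable.stronglyMeasurableAtFilter) h2.continuousAt

lemma sg13_symm (q : ℝ → ℂ) (hq : Continuous q) (x : ℝ) :
    sg13 q (1/2 - x) = sg13 q x := by
  have hder : ∀ y : ℝ, HasDerivAt (fun y => sg13 q y - sg13 q (1/2 - y)) 0 y := by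
    intro y
    have h1 := sg13_hasDerivAt q hq y
    have h2 : HasDerivAt (fun y : ℝ => sg13 q (1/2 - y))
        (-((q (1/2 - y) - q (1/2 - (1/2 - y))) / 2)) y := by
      exact HasDerivAt.comp_const_sub (1/2 : ℝ) y (sg13_hasDerivAt q hq (1/2 - y))
    have h3 : (1/2 : ℝ) - (1/2 - y) = y := by ring
    rw [h3] at h2
    have := h1.sub h2
    simp only [Pi.sub_def] at this
    refine this.congr_deriv ?_
    ring
  have hconst : ∀ a b : ℝ, (sg13 q a - sg13 q (1/2 - a)) = (sg13 q b - sg13 q (1/2 - b)) := by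
    intro a b
    exact is_const_of_deriv_eq_zero (fun y => (hder y).differentiableAt)
      (fun y => (hder y).deriv) a b
  have h14 := hconst x (1/4)
  have : (1/2 : ℝ) - 1/4 = 1/4 := by norm_num
  rw [this, sub_self] at h14
  exact (sub_eq_zero.mp h14).symm

/-- Condition (B) implies c'(1/2,λ) = −λ²·s(1/2,λ) for all λ. -/
theorem stmt13 (q : ℝ → ℂ) (hq : Continuous q)
    (c s cd sd : ℂ → ℝ → ℂ)
    (hc : ∀ l : ℂ, IsSol q (l ^ 2) (c l) (cd l))
    (hs : ∀ l : ℂ, IsSol q (l ^ 2) (s l) (sd l))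
    (hc0 : ∀ l : ℂ, c l 0 = 1) (hcd0 : ∀ l : ℂ, cd l 0 = 0)
    (hs0 : ∀ l : ℂ, s l 0 = 0) (hsd0 : ∀ l : ℂ, sd l 0 = 1)
    (hB : ∀ x ∈ Set.Icc (0 : ℝ) (1/2),
      (q x + q (1/2 - x)) / 2 = (∫ t in (1/2 : ℝ)..x, (q t - q (1/2 - t)) / 2) ^ 2) :
    ∀ l : ℂ, cd l (1/2) = -l ^ 2 * s l (1/2) := by
  intro l
  obtain ⟨hc1, hc2⟩ := hc l
  obtain ⟨hs1, hs2⟩ := hs l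
  have hσd := sg13_hasDerivAt q hq
  have hσhalf : sg13 q (1/2) = 0 := intervalIntegral.integral_same
  have hσ0 : sg13 q 0 = 0 := by
    have h := sg13_symm q hq (1/2)
    norm_num at h
    rw [h, hσhalf]
  set W : ℝ → ℂ := fun x => -l^2 * c l x * s l (1/2 - x) +
    (sd l (1/2 - x) - sg13 q x * s l (1/2 - x)) * (cd l x - sg13 q x * c l x) with hW
  have hWd : ∀ x : ℝ, ∃ D : ℂ, HasDerivAt W D x ∧
      (x ∈ Set.Icc (0:ℝ) (1/2) → D = 0) := by
    intro x
    have hS : HasDerivAt (fun y : ℝ => s l (1/2 - y)) (-(sd l (1/2 - x))) x :=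
      HasDerivAt.comp_const_sub (1/2) x (hs1 (1/2 - x))
    have hSd : HasDerivAt (fun y : ℝ => sd l (1/2 - y))
        (-(q (1/2 - x) * s l (1/2 - x) - l ^ 2 * s l (1/2 - x))) x :=
      HasDerivAt.comp_const_sub (1/2) x (hs2 (1/2 - x))
    refine ⟨_, (((hc1 x).const_mul (-l^2)).mul hS).add
      ((hSd.sub ((hσd x).mul hS)).mul ((hc2 x).sub ((hσd x).mul (hc1 x)))), ?_⟩
    intro hx
    have hr : (q x + q (1/2 - x)) / 2 = (sg13 q x) ^ 2 := hB x hx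
    simp only [Pi.sub_apply, Pi.mul_apply]
    linear_combination (sd l (1/2 - x) * c l x - s l (1/2 - x) * cd l x) * hr
  have hww : W (1/2) = W 0 := by
    have hcont : ContinuousOn W (Set.Icc 0 (1/2)) := by
      intro x _
      obtain ⟨D, hD, -⟩ := hWd x
      exact hD.continuousAt.continuousWithinAt
    have hkey := constant_of_has_deriv_right_zero hcont (fun x hx => by
      obtain ⟨D, hD, hz⟩ := hWd x
      have hx' : x ∈ Set.Icc (0:ℝ) (1/2) := Set.mem_Icc_of_Ico hx
      exact hz hx' ▸ hD.hasDerivWithinAt)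
    exact hkey (1/2) (by norm_num)
  have h1 : W (1/2) = cd l (1/2) := by
    simp only [hW]
    norm_num [hs0, hsd0, hσhalf]
  have h0 : W 0 = -l^2 * s l (1/2) := by
    simp only [hW]
    norm_num [hc0, hcd0, hσ0]
  rw [← h1, hww, h0]
end

section
/- Assume q is 1-periodic (q(x+1) = q(x) for all x) and let λ ∈ ℂ with λ ≠ 0 satisfy c'(1,λ) = 0, s(1,λ) = 0, c'(1/2,λ) = −λ²·s(1/2,λ), c'(3/2,λ) = −λ²·s(3/2,λ), and s(1/2,λ) ≠ 0. Then s'(1,λ) = c(1,λ), and consequently c(1,λ) = 1 or c(1,λ) = −1 and Δ(λ)² = 4. -/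
/-- The Wronskian of two solutions is constant. -/
lemma wronsk_const {q : ℝ → ℂ} {μ : ℂ} {y yd z zd : ℝ → ℂ}
    (hy : IsSol q μ y yd) (hz : IsSol q μ z zd) (x : ℝ) :
    y x * zd x - yd x * z x = y 0 * zd 0 - yd 0 * z 0 := by
  have hW : ∀ t : ℝ, HasDerivAt (fun u => y u * zd u - yd u * z u) 0 t := by
    intro t
    have h := ((hy.1 t).mul (hz.2 t)).sub ((hy.2 t).mul (hz.1 t))
    refine h.congr_deriv ?_
    ring
  have hd : Differentiable ℝ (fun u => y u * zd u - yd u * z u) :=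
    fun t => (hW t).differentiableAt
  have := is_const_of_deriv_eq_zero hd (fun t => (hW t).deriv) x 0
  exact this

/-- A solution vanishing to first order at 0 vanishes identically. -/
lemma sol_vanish {q : ℝ → ℂ} {μ : ℂ} {c cd s sd g gd : ℝ → ℂ}
    (hc : IsSol q μ c cd) (hs : IsSol q μ s sd) (hg : IsSol q μ g gd)
    (hc0 : c 0 = 1) (hcd0 : cd 0 = 0) (hs0 : s 0 = 0) (hsd0 : sd 0 = 1)
    (hg0 : g 0 = 0) (hgd0 : gd 0 = 0) (x : ℝ) :
    g x = 0 ∧ gd x = 0 := by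
  have hcs : c x * sd x - cd x * s x = 1 := by
    have := wronsk_const hc hs x
    rw [hc0, hcd0, hs0, hsd0] at this
    simpa using this
  have hA : g x * cd x - gd x * c x = 0 := by
    have := wronsk_const hg hc x
    rw [hg0, hgd0] at this
    simpa using this
  have hB : g x * sd x - gd x * s x = 0 := by
    have := wronsk_const hg hs x
    rw [hg0, hgd0] at this
    simpa using this
  constructor
  · linear_combination c x * hB - s x * hA - g x * hcs
  · linear_combination cd x * hB - sd x * hA - gd x * hcs

/-- Shifting a solution by one period gives a solution. -/
lemma sol_shift {q : ℝ → ℂ} {μ : ℂ} {y yd : ℝ → ℂ}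
    (hy : IsSol q μ y yd) (hper : ∀ x : ℝ, q (x + 1) = q x) :
    IsSol q μ (fun x => y (x + 1)) (fun x => yd (x + 1)) := by
  constructor
  · intro x
    exact (hy.1 (x + 1)).comp_add_const x 1
  · intro x
    have := (hy.2 (x + 1)).comp_add_const x 1
    simpa [hper x] using this

/-- Difference with a scalar multiple of a solution is a solution. -/
lemma sol_sub {q : ℝ → ℂ} {μ a : ℂ} {y yd z zd : ℝ → ℂ}
    (hy : IsSol q μ y yd) (hz : IsSol q μ z zd) :
    IsSol q μ (fun x => y x - a * z x) (fun x => yd x - a * zd x) := by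
  constructor
  · intro x
    exact (hy.1 x).sub ((hz.1 x).const_mul a)
  · intro x
    have := (hy.2 x).sub ((hz.2 x).const_mul a)
    refine this.congr_deriv ?_
    ring

/-- Case s(1/2,λ) ≠ 0 in the sufficiency proof, under condition (B) relations. -/
theorem stmt16 (q : ℝ → ℂ) (hq : Continuous q)
    (c s cd sd : ℂ → ℝ → ℂ)
    (hc : ∀ l : ℂ, IsSol q (l ^ 2) (c l) (cd l))
    (hs : ∀ l : ℂ, IsSol q (l ^ 2) (s l) (sd l))
    (hc0 : ∀ l : ℂ, c l 0 = 1) (hcd0 : ∀ l : ℂ, cd l 0 = 0)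
    (hs0 : ∀ l : ℂ, s l 0 = 0) (hsd0 : ∀ l : ℂ, sd l 0 = 1)
    (hper : ∀ x : ℝ, q (x + 1) = q x) (l : ℂ) (hl : l ≠ 0)
    (h1 : cd l 1 = 0) (h2 : s l 1 = 0)
    (h3 : cd l (1/2) = -l ^ 2 * s l (1/2))
    (h4 : cd l (3/2) = -l ^ 2 * s l (3/2))
    (h5 : s l (1/2) ≠ 0) :
    sd l 1 = c l 1 ∧ (c l 1 = 1 ∨ c l 1 = -1) ∧ (c l 1 + sd l 1) ^ 2 = 4 := by
  set μ := l ^ 2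
  -- monodromy: c(x+1) = c(1) c(x), cd(x+1) = c(1) cd(x)
  have hgc : IsSol q μ (fun x => c l (x + 1) - c l 1 * c l x)
      (fun x => cd l (x + 1) - c l 1 * cd l x) :=
    sol_sub (sol_shift (hc l) hper) (hc l)
  have hcshift := fun x => sol_vanish (hc l) (hs l) hgc (hc0 l) (hcd0 l) (hs0 l) (hsd0 l)
    (by simp [hc0 l]) (by simp [hcd0 l, h1]) x
  -- monodromy: s(x+1) = s'(1) s(x)
  have hgs : IsSol q μ (fun x => s l (x + 1) - sd l 1 * s l x)
      (fun x => sd l (x + 1) - sd l 1 * sd l x) :=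
    sol_sub (sol_shift (hs l) hper) (hs l)
  have hsshift := fun x => sol_vanish (hc l) (hs l) hgs (hc0 l) (hcd0 l) (hs0 l) (hsd0 l)
    (by simp [hs0 l, h2]) (by simp [hsd0 l]) x
  have h32 : (1/2 : ℝ) + 1 = 3/2 := by norm_num
  -- evaluate at x = 1/2
  have e1 : cd l (3/2) = c l 1 * cd l (1/2) := by
    have := (hcshift (1/2)).2
    rw [h32] at this
    linear_combination this
  have e2 : s l (3/2) = sd l 1 * s l (1/2) := by
    have := (hsshift (1/2)).1
    rw [h32] at this
    linear_combination this
  -- derive sd l 1 = c l 1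
  have hmu : μ ≠ 0 := pow_ne_zero 2 hl
  have key : sd l 1 = c l 1 := by
    have h4' : -μ * (sd l 1 * s l (1/2)) = c l 1 * (-μ * s l (1/2)) := by
      rw [← e2, ← h3, ← e1, h4]
    have : μ * s l (1/2) * (sd l 1 - c l 1) = 0 := by linear_combination -h4'
    rcases mul_eq_zero.mp this with h | h
    · rcases mul_eq_zero.mp h with h' | h'
      exacts [absurd h' hmu, absurd h' h5]
    · linear_combination h
  -- Wronskian at 1
  have hw : c l 1 * sd l 1 = 1 := by
    have := wronsk_const (hc l) (hs l) 1
    rw [hc0 l, hcd0 l, hs0 l, hsd0 l, h1, h2] at this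
    simpa using this
  have hsq : c l 1 ^ 2 = 1 := by rw [← key] at hw ⊢; linear_combination hw
  have hcases : c l 1 = 1 ∨ c l 1 = -1 := by
    have : (c l 1 - 1) * (c l 1 + 1) = 0 := by linear_combination hsq
    rcases mul_eq_zero.mp this with h | h
    · left; linear_combination h
    · right; linear_combination h
  refine ⟨key, hcases, ?_⟩
  rw [key]
  rcases hcases with h | h <;> rw [h] <;> ring
end

section
/- Assume q is 1-periodic (q(x+1) = q(x) for all x) and let λ ∈ ℂ satisfy c'(1,λ) = 0, s(1,λ) = 0, c(1/2,λ) = s'(1/2,λ), c(3/2,λ) = s'(3/2,λ), and s'(1/2,λ) ≠ 0. Then s'(1,λ) = c(1,λ), and consequently c(1,λ) = 1 or c(1,λ) = −1 and Δ(λ)² = 4. -/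
/-- The Wronskian of two solutions is constant. -/
lemma wronski {q : ℝ → ℂ} {μ : ℂ} {y1 y1d y2 y2d : ℝ → ℂ}
    (h1 : IsSol q μ y1 y1d) (h2 : IsSol q μ y2 y2d) (a b : ℝ) :
    y1 a * y2d a - y1d a * y2 a = y1 b * y2d b - y1d b * y2 b := by
  have key : ∀ x : ℝ, HasDerivAt (fun x => y1 x * y2d x - y1d x * y2 x) 0 x := by
    intro x
    have h := ((h1.1 x).mul (h2.2 x)).sub ((h1.2 x).mul (h2.1 x))
    convert h using 1
    · rfl
    · rfl
    · ring
  exact is_const_of_deriv_eq_zero (fun x => (key x).differentiableAt)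
    (fun x => (key x).deriv) a b

/-- Shift of a solution by 1 is a solution, when q is 1-periodic. -/
lemma shift_sol {q : ℝ → ℂ} {μ : ℂ} {y yd : ℝ → ℂ}
    (h : IsSol q μ y yd) (hper : ∀ x : ℝ, q (x + 1) = q x) :
    IsSol q μ (fun x => y (x + 1)) (fun x => yd (x + 1)) := by
  constructor
  · intro x
    exact (h.1 (x + 1)).comp_add_const x 1
  · intro x
    have := (h.2 (x + 1)).comp_add_const x 1
    simpa [hper x] using this

/-- Any solution is a combination of the fundamental system c, s. -/
lemma rep {q : ℝ → ℂ} {μ : ℂ} {C S Cd Sd y yd : ℝ → ℂ}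
    (hc : IsSol q μ C Cd) (hs : IsSol q μ S Sd)
    (hc0 : C 0 = 1) (hcd0 : Cd 0 = 0) (hs0 : S 0 = 0) (hsd0 : Sd 0 = 1)
    (hy : IsSol q μ y yd) (x : ℝ) :
    y x = y 0 * C x + yd 0 * S x ∧ yd x = y 0 * Cd x + yd 0 * Sd x := by
  have Wcs : C x * Sd x - Cd x * S x = 1 := by
    have := wronski hc hs x 0
    rw [hc0, hcd0, hs0, hsd0] at this
    simpa using this
  have W1 : y x * Cd x - yd x * C x = -yd 0 := by
    have := wronski hy hc x 0
    rw [hc0, hcd0] at this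
    simpa using this
  have W2 : y x * Sd x - yd x * S x = y 0 := by
    have := wronski hy hs x 0
    rw [hs0, hsd0] at this
    simpa using this
  constructor
  · have : y x * (C x * Sd x - Cd x * S x)
        = C x * (y x * Sd x - yd x * S x) - S x * (y x * Cd x - yd x * C x) := by ring
    rw [Wcs, W1, W2] at this
    rw [mul_one] at this
    rw [this]; ring
  · have : yd x * (C x * Sd x - Cd x * S x)
        = Cd x * (y x * Sd x - yd x * S x) - Sd x * (y x * Cd x - yd x * C x) := by ring
    rw [Wcs, W1, W2] at this
    rw [mul_one] at this
    rw [this]; ring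

/-- Case s'(1/2,λ) ≠ 0 in the sufficiency proof, under the symmetry relations. -/
theorem stmt17 (q : ℝ → ℂ) (hq : Continuous q)
    (c s cd sd : ℂ → ℝ → ℂ)
    (hc : ∀ l : ℂ, IsSol q (l ^ 2) (c l) (cd l))
    (hs : ∀ l : ℂ, IsSol q (l ^ 2) (s l) (sd l))
    (hc0 : ∀ l : ℂ, c l 0 = 1) (hcd0 : ∀ l : ℂ, cd l 0 = 0)
    (hs0 : ∀ l : ℂ, s l 0 = 0) (hsd0 : ∀ l : ℂ, sd l 0 = 1)
    (hper : ∀ x : ℝ, q (x + 1) = q x) (l : ℂ)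
    (h1 : cd l 1 = 0) (h2 : s l 1 = 0)
    (h3 : c l (1/2) = sd l (1/2))
    (h4 : c l (3/2) = sd l (3/2))
    (h5 : sd l (1/2) ≠ 0) :
    sd l 1 = c l 1 ∧ (c l 1 = 1 ∨ c l 1 = -1) ∧ (c l 1 + sd l 1) ^ 2 = 4 := by
  -- shifted solutions
  have hcs := shift_sol (hc l) hper
  have hss := shift_sol (hs l) hper
  -- c(x+1) = c(1) c(x) + cd(1) s(x)
  have repc := rep (hc l) (hs l) (hc0 l) (hcd0 l) (hs0 l) (hsd0 l) hcs
  have reps := rep (hc l) (hs l) (hc0 l) (hcd0 l) (hs0 l) (hsd0 l) hss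
  simp only [zero_add] at repc reps
  -- c(3/2) = c(1) * c(1/2)
  have hc32 : c l (3/2 : ℝ) = c l 1 * c l (1/2 : ℝ) := by
    have := (repc (1/2 : ℝ)).1
    norm_num at this ⊢
    rw [this, h1]
    ring
  -- sd(3/2) = sd(1) * sd(1/2)
  have hsd32 : sd l (3/2 : ℝ) = sd l 1 * sd l (1/2 : ℝ) := by
    have := (reps (1/2 : ℝ)).2
    norm_num at this ⊢
    rw [this, h2]
    ring
  -- c(1) = sd(1)
  have key : sd l 1 = c l 1 := by
    have : c l 1 * sd l (1/2 : ℝ) = sd l 1 * sd l (1/2 : ℝ) := by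
      calc c l 1 * sd l (1/2 : ℝ) = c l 1 * c l (1/2 : ℝ) := by rw [h3]
        _ = c l (3/2 : ℝ) := hc32.symm
        _ = sd l (3/2 : ℝ) := h4
        _ = sd l 1 * sd l (1/2 : ℝ) := hsd32
    exact (mul_right_cancel₀ h5 this).symm
  -- Wronskian at 1
  have hW : c l 1 * sd l 1 - cd l 1 * s l 1 = 1 := by
    have := wronski (hc l) (hs l) 1 0
    rw [hc0 l, hcd0 l, hs0 l, hsd0 l] at this
    simpa using this
  rw [h1, h2] at hW
  have hsq : c l 1 * c l 1 = 1 := by rw [← key] at hW ⊢; simpa using hW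
  refine ⟨key, mul_self_eq_one_iff.mp hsq, ?_⟩
  rw [key]
  have : (c l 1 + c l 1) ^ 2 = 4 * (c l 1 * c l 1) := by ring
  rw [this, hsq]; ring
end
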